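/- The hit-and-run kernel restricted to a line, H_a(x, A) = ∫_{L(x,a)} 1_A(y) ρ(y) dy / ∫_{L(x,a)} ρ(y) dy where L(x,a) = {x + sa ∈ K : s ∈ R}, is reversible with respect to π (the measure with density ρ), i.e., ∫_A H_a(x,B) ρ(x) dx = ∫_B H_a(x,A) ρ(x) dx for all measurable A, B ⊆ K. -/

import Mathlib

open MeasureTheory
open scoped ENNReal

/-- The hit-and-run kernel along the chord through `x` in direction `a`:
`H_a(x,A) = ∫_{L(x,a)} 1_A ρ dy / ∫_{L(x,a)} ρ dy`, chords parametrized by `r ∈ ℝ`. -/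
noncomputable def hitAndRunKernel {d : ℕ} (K : Set (EuclideanSpace ℝ (Fin d)))
    (ρ : EuclideanSpace ℝ (Fin d) → ℝ) (a : EuclideanSpace ℝ (Fin d))
    (x : EuclideanSpace ℝ (Fin d)) (A : Set (EuclideanSpace ℝ (Fin d))) : ℝ :=
  (∫ r in {r : ℝ | x + r • a ∈ K ∩ A}, ρ (x + r • a) ∂volume) /
    (∫ r in {r : ℝ | x + r • a ∈ K}, ρ (x + r • a) ∂volume)

section HRaux

variable {d : ℕ} (ρ : EuclideanSpace ℝ (Fin d) → ℝ) (a : EuclideanSpace ℝ (Fin d))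

/-- indicator density in `ℝ≥0∞`. -/
noncomputable def HRphi (S : Set (EuclideanSpace ℝ (Fin d)))
    (y : EuclideanSpace ℝ (Fin d)) : ℝ≥0∞ :=
  S.indicator (fun z => ENNReal.ofReal (ρ z)) y

/-- lintegral of the density along the line through `x` in direction `a`, restricted to `S`. -/
noncomputable def HRNL (S : Set (EuclideanSpace ℝ (Fin d)))
    (x : EuclideanSpace ℝ (Fin d)) : ℝ≥0∞ :=
  ∫⁻ r : ℝ, HRphi ρ S (x + r • a) ∂volume

variable {ρ a}

lemma HRphi_measurable {S : Set (EuclideanSpace ℝ (Fin d))} (hS : MeasurableSet S)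
    (hρ : Measurable ρ) : Measurable (HRphi ρ S) :=
  (hρ.ennreal_ofReal).indicator hS

lemma HRline_measurable (x : EuclideanSpace ℝ (Fin d)) :
    Measurable (fun r : ℝ => x + r • a) := by fun_prop

lemma HRNL_measurable {S : Set (EuclideanSpace ℝ (Fin d))} (hS : MeasurableSet S)
    (hρ : Measurable ρ) : Measurable (HRNL ρ a S) := by
  apply Measurable.lintegral_prod_right'
    (f := fun p : (EuclideanSpace ℝ (Fin d)) × ℝ => HRphi ρ S (p.1 + p.2 • a))
  exact (HRphi_measurable hS hρ).comp (by fun_prop)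

lemma HRNL_shift (S : Set (EuclideanSpace ℝ (Fin d))) (x : EuclideanSpace ℝ (Fin d)) (s : ℝ) :
    HRNL ρ a S (x + s • a) = HRNL ρ a S x := by
  unfold HRNL
  have : ∀ r : ℝ, x + s • a + r • a = x + (s + r) • a := by
    intro r; rw [add_smul]; abel
  simp_rw [this]
  exact lintegral_add_left_eq_self (fun r => HRphi ρ S (x + r • a)) s

lemma HRNL_eq_setLintegral {S : Set (EuclideanSpace ℝ (Fin d))} (hS : MeasurableSet S)
    (x : EuclideanSpace ℝ (Fin d)) :
    HRNL ρ a S x = ∫⁻ r in {r : ℝ | x + r • a ∈ S}, ENNReal.ofReal (ρ (x + r • a)) ∂volume := by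
  have hT : MeasurableSet {r : ℝ | x + r • a ∈ S} := (HRline_measurable x) hS
  rw [← lintegral_indicator hT]
  refine lintegral_congr fun r => ?_
  by_cases h : x + r • a ∈ S
  · simp [HRphi, Set.indicator_of_mem, h, Set.mem_setOf_eq]
  · simp [HRphi, Set.indicator_of_notMem, h, Set.mem_setOf_eq]

lemma HRNL_mono {S T : Set (EuclideanSpace ℝ (Fin d))} (hST : S ⊆ T)
    (x : EuclideanSpace ℝ (Fin d)) :
    HRNL ρ a S x ≤ HRNL ρ a T x :=
  lintegral_mono fun r =>
    Set.indicator_le_indicator_of_subset hST (fun y => zero_le) _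

lemma HR_setIntegral_eq {K S : Set (EuclideanSpace ℝ (Fin d))} (hS : MeasurableSet S)
    (hSK : S ⊆ K) (hρ_meas : Measurable ρ) (hρ_pos : ∀ y ∈ K, 0 < ρ y)
    (x : EuclideanSpace ℝ (Fin d)) :
    ∫ r in {r : ℝ | x + r • a ∈ S}, ρ (x + r • a) ∂volume = (HRNL ρ a S x).toReal := by
  rw [HRNL_eq_setLintegral hS x]
  have hT : MeasurableSet {r : ℝ | x + r • a ∈ S} := (HRline_measurable x) hS
  rw [integral_eq_lintegral_of_nonneg_ae]
  · exact ae_restrict_of_forall_mem hT fun r hr => (hρ_pos _ (hSK hr)).le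
  · exact ((hρ_meas.comp (HRline_measurable x)).aestronglyMeasurable)

lemma HR_pointwise {K B : Set (EuclideanSpace ℝ (Fin d))}
    (hB : MeasurableSet B) (hK : MeasurableSet K) (hBK : B ⊆ K)
    (hρ_meas : Measurable ρ) (hρ_pos : ∀ y ∈ K, 0 < ρ y)
    {x : EuclideanSpace ℝ (Fin d)} (hx : 0 ≤ ρ x) :
    hitAndRunKernel K ρ a x B * ρ x
      = ((HRNL ρ a B x / HRNL ρ a K x) * ENNReal.ofReal (ρ x)).toReal := by
  unfold hitAndRunKernel
  rw [Set.inter_eq_self_of_subset_right hBK]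
  rw [HR_setIntegral_eq hB hBK hρ_meas hρ_pos x,
    HR_setIntegral_eq hK subset_rfl hρ_meas hρ_pos x]
  rw [ENNReal.toReal_mul, ENNReal.toReal_div, ENNReal.toReal_ofReal hx]

lemma HR_div_ne_top {K B : Set (EuclideanSpace ℝ (Fin d))} (hBK : B ⊆ K)
    (hρ_pos : ∀ y ∈ K, 0 < ρ y) (x : EuclideanSpace ℝ (Fin d)) :
    HRNL ρ a B x / HRNL ρ a K x ≠ ∞ := by
  have hle : HRNL ρ a B x ≤ HRNL ρ a K x := HRNL_mono hBK x
  intro h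
  rcases ENNReal.div_eq_top.mp h with ⟨h1, h2⟩ | ⟨h1, h2⟩
  · exact h1 (le_antisymm (h2 ▸ hle) bot_le)
  · exact h2 (top_le_iff.mp (h1 ▸ hle))

/-- One side of the reversibility identity as an `ℝ≥0∞` lintegral. -/
lemma HR_side_eq {K A B : Set (EuclideanSpace ℝ (Fin d))}
    (hK : MeasurableSet K) (hA : MeasurableSet A) (hB : MeasurableSet B)
    (hAK : A ⊆ K) (hBK : B ⊆ K)
    (hρ_meas : Measurable ρ) (hρ_pos : ∀ y ∈ K, 0 < ρ y) :
    ∫ x in A, hitAndRunKernel K ρ a x B * ρ x ∂volume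
      = (∫⁻ x, (HRNL ρ a B x / HRNL ρ a K x) * HRphi ρ A x ∂volume).toReal := by
  have hmeas : AEMeasurable
      (fun x => (HRNL ρ a B x / HRNL ρ a K x) * ENNReal.ofReal (ρ x))
      (volume.restrict A) :=
    (((HRNL_measurable hB hρ_meas).div (HRNL_measurable hK hρ_meas)).mul
      hρ_meas.ennreal_ofReal).aemeasurable
  have h1 : ∫ x in A, hitAndRunKernel K ρ a x B * ρ x ∂volume
      = ∫ x in A, ((HRNL ρ a B x / HRNL ρ a K x) * ENNReal.ofReal (ρ x)).toReal ∂volume := by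
    refine setIntegral_congr_fun hA fun x hx => ?_
    exact HR_pointwise hB hK hBK hρ_meas hρ_pos (hρ_pos x (hAK hx)).le
  rw [h1, integral_toReal hmeas ?_, ← lintegral_indicator hA]
  · congr 1
    apply lintegral_congr
    intro x
    by_cases hx : x ∈ A
    · rw [Set.indicator_of_mem hx]
      unfold HRphi
      rw [Set.indicator_of_mem hx]
    · rw [Set.indicator_of_notMem hx]
      unfold HRphi
      rw [Set.indicator_of_notMem hx, mul_zero]
  · refine Filter.Eventually.of_forall fun x => ?_
    exact lt_top_iff_ne_top.mpr (ENNReal.mul_ne_top (HR_div_ne_top hBK hρ_pos x)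
      ENNReal.ofReal_ne_top)

/-- The core symmetry, proved by Tonelli and translation invariance. -/
lemma HR_symm {K A B : Set (EuclideanSpace ℝ (Fin d))}
    (hK : MeasurableSet K) (hA : MeasurableSet A) (hB : MeasurableSet B)
    (hρ_meas : Measurable ρ) :
    ∫⁻ x, (HRNL ρ a B x / HRNL ρ a K x) * HRphi ρ A x ∂volume
      = ∫⁻ x, (HRNL ρ a A x / HRNL ρ a K x) * HRphi ρ B x ∂volume := by
  have hφA := HRphi_measurable hA hρ_meas
  have hφB := HRphi_measurable hB hρ_meas
  have hNK := HRNL_measurable (a := a) hK hρ_meas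
  calc
    ∫⁻ x, (HRNL ρ a B x / HRNL ρ a K x) * HRphi ρ A x ∂volume
        = ∫⁻ x, ∫⁻ r : ℝ, HRphi ρ B (x + r • a) * ((HRNL ρ a K x)⁻¹ * HRphi ρ A x)
            ∂volume ∂volume := by
          apply lintegral_congr; intro x
          have hm : Measurable fun r : ℝ => HRphi ρ B (x + r • a) :=
            hφB.comp (HRline_measurable x)
          rw [lintegral_mul_const _ hm]
          unfold HRNL
          rw [ENNReal.div_eq_inv_mul]
          ring
    _ = ∫⁻ r : ℝ, ∫⁻ x, HRphi ρ B (x + r • a) * ((HRNL ρ a K x)⁻¹ * HRphi ρ A x)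
            ∂volume ∂volume := by
          apply lintegral_lintegral_swap
          apply Measurable.aemeasurable
          apply Measurable.mul
          · exact hφB.comp (by fun_prop)
          · exact ((hNK.comp measurable_fst).inv.mul (hφA.comp measurable_fst))
    _ = ∫⁻ r : ℝ, ∫⁻ x, HRphi ρ B x * ((HRNL ρ a K x)⁻¹ * HRphi ρ A (x + (-r) • a))
            ∂volume ∂volume := by
          refine lintegral_congr fun r => ?_
          rw [← lintegral_add_right_eq_self
            (fun x => HRphi ρ B x * ((HRNL ρ a K x)⁻¹ * HRphi ρ A (x + (-r) • a))) (r • a)]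
          refine lintegral_congr fun x => ?_
          have h1 : x + r • a + (-r) • a = x := by
            rw [add_assoc, ← add_smul]; simp
          rw [h1, HRNL_shift]
    _ = ∫⁻ x, ∫⁻ r : ℝ, HRphi ρ B x * ((HRNL ρ a K x)⁻¹ * HRphi ρ A (x + (-r) • a))
            ∂volume ∂volume := by
          symm
          apply lintegral_lintegral_swap
          apply Measurable.aemeasurable
          apply Measurable.mul
          · exact hφB.comp measurable_fst
          · exact ((hNK.comp measurable_fst).inv.mul (hφA.comp (by fun_prop)))
    _ = ∫⁻ x, (HRNL ρ a A x / HRNL ρ a K x) * HRphi ρ B x ∂volume := by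
          apply lintegral_congr; intro x
          have hmA : Measurable fun r : ℝ => HRphi ρ A (x + (-r) • a) :=
            hφA.comp (by fun_prop)
          have h2 : Measurable fun r : ℝ => (HRNL ρ a K x)⁻¹ * HRphi ρ A (x + (-r) • a) :=
            measurable_const.mul hmA
          rw [lintegral_const_mul _ h2, lintegral_const_mul _ hmA]
          have hneg : ∫⁻ r : ℝ, HRphi ρ A (x + (-r) • a) ∂volume = HRNL ρ a A x := by
            unfold HRNL
            exact (Measure.measurePreserving_neg (volume : Measure ℝ)).lintegral_comp
              (hφA.comp (HRline_measurable x))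
          rw [hneg, ENNReal.div_eq_inv_mul]
          ring

end HRaux

/-- the line-restricted hit-and-run kernel `H_a` is reversible with respect
to the measure with density `ρ`: for all measurable `A, B ⊆ K`,
`∫_A H_a(x,B) ρ(x) dx = ∫_B H_a(x,A) ρ(x) dx`. -/
theorem hitAndRun_line_kernel_reversible {d : ℕ}
    (K : Set (EuclideanSpace ℝ (Fin d))) (hK : MeasurableSet K)
    (ρ : EuclideanSpace ℝ (Fin d) → ℝ) (hρ_meas : Measurable ρ)
    (hρ_pos : ∀ x ∈ K, 0 < ρ x) (hρ_int : IntegrableOn ρ K)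
    (a : EuclideanSpace ℝ (Fin d)) (ha : ‖a‖ = 1)
    (A B : Set (EuclideanSpace ℝ (Fin d))) (hA : MeasurableSet A) (hB : MeasurableSet B)
    (hAK : A ⊆ K) (hBK : B ⊆ K) :
    ∫ x in A, hitAndRunKernel K ρ a x B * ρ x ∂volume
      = ∫ x in B, hitAndRunKernel K ρ a x A * ρ x ∂volume := by
  rw [HR_side_eq hK hA hB hAK hBK hρ_meas hρ_pos,
    HR_side_eq hK hB hA hBK hAK hρ_meas hρ_pos,
    HR_symm hK hA hB hρ_meas]
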